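/- arXiv:1907.01883 — 2 statements merged into one kernel-verified Lean document; each statement's English description precedes it below -/
import Mathlib

section
/- Let H be a real Hilbert space and B : H × H → ℝ a map (nonlinear in its first argument, linear in its second) such that there exist constants Λ ≥ λ > 0 with |B(v₁,ψ) − B(v₂,ψ)| ≤ Λ ‖v₁ − v₂‖ ‖ψ‖ and B(v,v−ψ) − B(ψ,v−ψ) ≥ λ ‖v − ψ‖² for all v, v₁, v₂, ψ ∈ H. Then for every bounded linear functional F on H there exists a unique u ∈ H with B(u,v) = F(v) for all v ∈ H. -/
open RealInnerProductSpace

/-- Browder–Minty / Zarantonello: a strongly monotone, Lipschitz continuous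
(nonlinear in the first argument, linear-continuous in the second) form on a real
Hilbert space admits a unique solution of `B u v = F v` for every bounded linear
functional `F`. -/
theorem stmt0
    {H : Type*} [NormedAddCommGroup H] [InnerProductSpace ℝ H] [CompleteSpace H]
    (B : H → H →L[ℝ] ℝ) (Λ lam : ℝ) (hlam : 0 < lam) (hΛ : lam ≤ Λ)
    (hLip : ∀ v₁ v₂ ψ : H, |B v₁ ψ - B v₂ ψ| ≤ Λ * ‖v₁ - v₂‖ * ‖ψ‖)
    (hMono : ∀ v ψ : H, lam * ‖v - ψ‖ ^ 2 ≤ B v (v - ψ) - B ψ (v - ψ))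
    (F : H →L[ℝ] ℝ) :
    ∃! u : H, ∀ v : H, B u v = F v := by
  have hΛ0 : 0 < Λ := lt_of_lt_of_le hlam hΛ
  set R := (InnerProductSpace.toDual ℝ H).symm with hR
  set g : H → H := fun v => R (B v) with hg
  have hginner : ∀ v x : H, ⟪g v, x⟫ = B v x := fun v x =>
    InnerProductSpace.toDual_symm_apply
  have hgLip : ∀ v w : H, ‖g v - g w‖ ≤ Λ * ‖v - w‖ := by
    intro v w
    have : g v - g w = R (B v - B w) := by simp [hg, map_sub]
    rw [this, LinearIsometryEquiv.norm_map]
    apply ContinuousLinearMap.opNorm_le_bound _ (by positivity)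
    intro x
    simpa [mul_assoc] using hLip v w x
  have hgMono : ∀ v w : H, lam * ‖v - w‖ ^ 2 ≤ ⟪g v - g w, v - w⟫ := by
    intro v w
    rw [inner_sub_left, hginner, hginner]
    exact hMono v w
  set f := R F with hf
  set ρ := lam / Λ ^ 2 with hρdef
  have hρ : 0 < ρ := by positivity
  set T : H → H := fun v => v - ρ • (g v - f) with hT
  set k2 := 1 - lam ^ 2 / Λ ^ 2 with hk2def
  have hk2nn : 0 ≤ k2 := by
    have : lam ^ 2 ≤ Λ ^ 2 := by nlinarith
    rw [hk2def]
    have : lam ^ 2 / Λ ^ 2 ≤ 1 := by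
      rw [div_le_one (by positivity)]; exact this
    linarith
  have hk2lt : k2 < 1 := by
    have : 0 < lam ^ 2 / Λ ^ 2 := by positivity
    rw [hk2def]; linarith
  have key : ∀ v w : H, ‖T v - T w‖ ^ 2 ≤ k2 * ‖v - w‖ ^ 2 := by
    intro v w
    have hTvw : T v - T w = (v - w) - ρ • (g v - g w) := by
      simp only [hT, smul_sub]; abel
    rw [hTvw, norm_sub_sq_real]
    have h1 : ⟪v - w, ρ • (g v - g w)⟫ = ρ * ⟪g v - g w, v - w⟫ := by
      rw [real_inner_smul_right, real_inner_comm]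
    have e1 : ‖ρ • (g v - g w)‖ = ρ * ‖g v - g w‖ := by
      rw [norm_smul, Real.norm_of_nonneg hρ.le]
    rw [h1, e1]
    have h2 : ρ * Λ ^ 2 = lam := by rw [hρdef]; exact div_mul_cancel₀ lam (by positivity)
    have h3 : lam ^ 2 / Λ ^ 2 = ρ * lam := by rw [hρdef]; ring
    have h4 := hgMono v w
    have h5 := hgLip v w
    have h6 : 0 ≤ ‖g v - g w‖ := norm_nonneg _
    have h7 : 0 ≤ ‖v - w‖ := norm_nonneg _
    have h8 : ‖g v - g w‖ ^ 2 ≤ (Λ * ‖v - w‖) ^ 2 := by nlinarith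
    rw [hk2def, h3]
    nlinarith [mul_le_mul_of_nonneg_left h4 hρ.le, sq_nonneg ρ, mul_le_mul_of_nonneg_left h8 (sq_nonneg ρ)]
  set K : NNReal := ⟨Real.sqrt k2, Real.sqrt_nonneg _⟩ with hK
  have hK1 : K < 1 := by
    rw [← NNReal.coe_lt_coe]
    exact (Real.sqrt_lt' one_pos).mpr (by simpa using hk2lt)
  have hLipT : LipschitzWith K T := by
    apply LipschitzWith.of_dist_le_mul
    intro v w
    rw [dist_eq_norm, dist_eq_norm]
    have h := Real.sqrt_le_sqrt (key v w)
    rwa [Real.sqrt_sq (norm_nonneg _), Real.sqrt_mul hk2nn,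
      Real.sqrt_sq (norm_nonneg _)] at h
  have hC : ContractingWith K T := ⟨hK1, hLipT⟩
  obtain ⟨u, hu, -⟩ := hC.exists_fixedPoint 0 (edist_ne_top _ _)
  have hgu : g u = f := by
    have : u - ρ • (g u - f) = u := hu
    have h0 : ρ • (g u - f) = 0 := by
      have := sub_eq_self.mp this
      exact this
    have := smul_eq_zero.mp h0
    rcases this with h | h
    · exact absurd h hρ.ne'
    · exact sub_eq_zero.mp h
  refine ⟨u, ?_, ?_⟩
  · intro v
    rw [← hginner, hgu, hf]
    exact InnerProductSpace.toDual_symm_apply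
  · intro w hw
    have h1 := hMono w u
    have h2 : B w (w - u) - B u (w - u) = 0 := by
      rw [hw, ← hginner u, hgu, hf, InnerProductSpace.toDual_symm_apply]
      ring
    have : lam * ‖w - u‖ ^ 2 ≤ 0 := by rw [← h2]; exact h1
    have hx : ‖w - u‖ ^ 2 ≤ 0 := by
      have h0 : lam * ‖w - u‖ ^ 2 ≤ lam * 0 := by simpa using this
      exact le_of_mul_le_mul_left h0 hlam
    have hnorm : ‖w - u‖ = 0 :=
      pow_eq_zero_iff two_ne_zero |>.mp (le_antisymm hx (sq_nonneg _))
    have := norm_eq_zero.mp hnorm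
    exact sub_eq_zero.mp this
end

section
/- Newton-type linearization error estimate: Under the hypotheses of the previous Taylor identity, set A_L(x,∇u*,∇v) := A(x,∇u*) + D_ξ A(x,∇u*)∇(v − u*). Then for any v ∈ H¹₀(Ω) ∩ W^{1,∞}(Ω) with u* ∈ H¹₀(Ω) ∩ W^{1,∞}(Ω), η_lin(v) := sup_{w ∈ W, |w|₁=1} |∫_Ω [A(x,∇v) − A_L(x,∇u*,∇v)]·∇w dx| ≤ L_A ‖∇(v − u*)‖_{L^∞(Ω)} |v − u*|₁. -/
open MeasureTheory

section Aux

variable {α : Type*} [MeasurableSpace α] {μ : Measure α}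

lemma aux_integrable_mul {f g : α → ℝ} (hf : MemLp f 2 μ) (hg : MemLp g 2 μ) :
    Integrable (fun x => f x * g x) μ := by
  have h := L2.integrable_inner (𝕜 := ℝ) (hf.toLp f) (hg.toLp g)
  apply h.congr
  filter_upwards [hf.coeFn_toLp, hg.coeFn_toLp] with x h1 h2
  simp [h1, h2, RCLike.inner_apply, mul_comm]

lemma aux_cs {f g : α → ℝ} (hf : MemLp f 2 μ) (hg : MemLp g 2 μ) :
    ∫ x, f x * g x ∂μ ≤
      Real.sqrt (∫ x, f x ^ 2 ∂μ) * Real.sqrt (∫ x, g x ^ 2 ∂μ) := by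
  set F := hf.toLp f
  set G := hg.toLp g
  have hFG : (inner ℝ F G : ℝ) = ∫ x, f x * g x ∂μ := by
    rw [L2.inner_def]
    apply integral_congr_ae
    filter_upwards [hf.coeFn_toLp, hg.coeFn_toLp] with x h1 h2
    simp [F, G, h1, h2, RCLike.inner_apply, mul_comm]
  have hFn : ‖F‖ = Real.sqrt (∫ x, f x ^ 2 ∂μ) := by
    rw [← Real.sqrt_sq (norm_nonneg F)]
    congr 1
    have : (‖F‖ : ℝ) ^ 2 = (inner ℝ F F : ℝ) := (real_inner_self_eq_norm_sq F).symm
    rw [this, L2.inner_def]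
    apply integral_congr_ae
    filter_upwards [hf.coeFn_toLp] with x h1
    simp [F, h1, RCLike.inner_apply, sq]
  have hGn : ‖G‖ = Real.sqrt (∫ x, g x ^ 2 ∂μ) := by
    rw [← Real.sqrt_sq (norm_nonneg G)]
    congr 1
    have : (‖G‖ : ℝ) ^ 2 = (inner ℝ G G : ℝ) := (real_inner_self_eq_norm_sq G).symm
    rw [this, L2.inner_def]
    apply integral_congr_ae
    filter_upwards [hg.coeFn_toLp] with x h1
    simp [G, h1, RCLike.inner_apply, sq]
  calc ∫ x, f x * g x ∂μ = (inner ℝ F G : ℝ) := hFG.symm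
    _ ≤ ‖F‖ * ‖G‖ := real_inner_le_norm F G
    _ = _ := by rw [hFn, hGn]

lemma aux_taylor {E : Type*} [NormedAddCommGroup E] [NormedSpace ℝ E]
    {F : Type*} [NormedAddCommGroup F] [NormedSpace ℝ F]
    (f : E → F) (hf : ContDiff ℝ 1 f) (L : ℝ)
    (hL : ∀ ξ₁ ξ₂ : E, ‖fderiv ℝ f ξ₁ - fderiv ℝ f ξ₂‖ ≤ L * ‖ξ₁ - ξ₂‖)
    (a b : E) :
    ‖f b - f a - fderiv ℝ f a (b - a)‖ ≤ L * ‖b - a‖ * ‖b - a‖ := by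
  have hd : ∀ x ∈ segment ℝ a b, DifferentiableAt ℝ f x := fun x _ =>
    hf.differentiable one_ne_zero x
  have hb : ∀ x ∈ segment ℝ a b, ‖fderiv ℝ f x - fderiv ℝ f a‖ ≤ L * ‖b - a‖ := by
    rintro x ⟨s, t, hs, ht, hst, rfl⟩
    have hx : s • a + t • b - a = t • (b - a) := by
      have : s = 1 - t := by linarith
      subst this
      module
    have h2 := hL (s • a + t • b) a
    rw [hx, norm_smul, Real.norm_eq_abs, abs_of_nonneg ht] at h2
    rcases le_or_gt 0 L with hL0 | hL0
    · refine h2.trans ?_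
      have ht1 : t ≤ 1 := by linarith
      nlinarith [mul_nonneg (mul_nonneg hL0 (by linarith : (0:ℝ) ≤ 1 - t))
        (norm_nonneg (b - a))]
    · have hba : ‖b - a‖ = 0 := by
        have h3 := hL b a
        have h4 : (0 : ℝ) ≤ ‖fderiv ℝ f b - fderiv ℝ f a‖ := norm_nonneg _
        nlinarith [norm_nonneg (b - a)]
      rw [hba] at h2 ⊢
      simpa using h2
  have := (convex_segment a b).norm_image_sub_le_of_norm_fderiv_le' hd hb
    (left_mem_segment ℝ a b) (right_mem_segment ℝ a b)
  simpa [mul_comm, mul_left_comm, mul_assoc] using this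

end Aux

/-- Newton-type linearization error estimate (Lemma 4.4): with
`A_L(x,∇u*,∇v) = A(x,∇u*) + D_ξA(x,∇u*)∇(v - u*)` and `D_ξA` Lipschitz with
constant `L_A`, the linearization error tested against `w` is bounded by
`L_A ‖∇(v - u*)‖_{L∞} |v - u*|₁ ‖w‖`; the `L∞`-norm is expressed through any
a.e. bound `M` on `‖∇(v - u*)‖`. -/
theorem stmt8
    {d : ℕ} {Ω : Type*} [MeasurableSpace Ω] (μ : Measure Ω)
    (A : Ω → EuclideanSpace ℝ (Fin d) → EuclideanSpace ℝ (Fin d))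
    (LA : ℝ)
    (hA : ∀ᵐ x ∂μ, ContDiff ℝ 1 (A x))
    (hLip : ∀ᵐ x ∂μ, ∀ ξ₁ ξ₂ : EuclideanSpace ℝ (Fin d),
      ‖fderiv ℝ (A x) ξ₁ - fderiv ℝ (A x) ξ₂‖ ≤ LA * ‖ξ₁ - ξ₂‖)
    (gv gu w : Ω → EuclideanSpace ℝ (Fin d))
    (hgv : MemLp gv 2 μ) (hgu : MemLp gu 2 μ) (hw : MemLp w 2 μ)
    (hint : Integrable (fun x =>
      (inner ℝ (A x (gv x) - (A x (gu x) + fderiv ℝ (A x) (gu x) (gv x - gu x)))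
        (w x) : ℝ)) μ)
    (M : ℝ) (hM : ∀ᵐ x ∂μ, ‖gv x - gu x‖ ≤ M) :
    |∫ x, (inner ℝ (A x (gv x) - (A x (gu x) + fderiv ℝ (A x) (gu x) (gv x - gu x)))
        (w x) : ℝ) ∂μ|
      ≤ LA * M * Real.sqrt (∫ x, ‖gv x - gu x‖ ^ 2 ∂μ)
          * Real.sqrt (∫ x, ‖w x‖ ^ 2 ∂μ) := by
  by_cases hμ : μ = 0
  · subst hμ; simp
  rcases Nat.eq_zero_or_pos d with hd | hd
  · subst hd
    have hz : ∀ v : EuclideanSpace ℝ (Fin 0), v = 0 := fun v => Subsingleton.elim v 0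
    have h1 : (∫ x, ‖gv x - gu x‖ ^ 2 ∂μ) = 0 := by
      simp [hz (gv _ - gu _)]
    have h2 : (∫ x, (inner ℝ (A x (gv x) - (A x (gu x) + fderiv ℝ (A x) (gu x)
        (gv x - gu x))) (w x) : ℝ) ∂μ) = 0 := by
      have : ∀ x, (inner ℝ (A x (gv x) - (A x (gu x) + fderiv ℝ (A x) (gu x)
          (gv x - gu x))) (w x) : ℝ) = 0 := by
        intro x
        rw [hz (w x)]
        simp
      simp only [this, integral_zero]
    rw [h1, h2]
    simp
  -- nontrivial case
  have hne : (ae μ).NeBot := ae_neBot.mpr hμ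
  obtain ⟨x₀, hx₀L, hx₀M⟩ := (hLip.and hM).exists
  have hM0 : 0 ≤ M := le_trans (norm_nonneg _) hx₀M
  have hLA0 : 0 ≤ LA := by
    have h1 := hx₀L (EuclideanSpace.single ⟨0, hd⟩ (1 : ℝ)) 0
    have h2 : ‖EuclideanSpace.single (⟨0, hd⟩ : Fin d) (1 : ℝ) - 0‖ = 1 := by
      simp [EuclideanSpace.norm_single]
    rw [h2, mul_one] at h1
    exact le_trans (norm_nonneg _) h1
  set δ : Ω → EuclideanSpace ℝ (Fin d) := fun x => gv x - gu x with hδdef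
  have hδ : MemLp δ 2 μ := hgv.sub hgu
  have hδn : MemLp (fun x => ‖δ x‖) 2 μ := hδ.norm
  have hwn : MemLp (fun x => ‖w x‖) 2 μ := hw.norm
  have hmul : Integrable (fun x => ‖δ x‖ * ‖w x‖) μ := aux_integrable_mul hδn hwn
  have hpt : ∀ᵐ x ∂μ, |(inner ℝ (A x (gv x) - (A x (gu x) + fderiv ℝ (A x) (gu x)
      (gv x - gu x))) (w x) : ℝ)| ≤ (LA * M) * (‖δ x‖ * ‖w x‖) := by
    filter_upwards [hA, hLip, hM] with x hAx hLx hMx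
    have key : ‖A x (gv x) - (A x (gu x) + fderiv ℝ (A x) (gu x) (gv x - gu x))‖
        ≤ LA * ‖δ x‖ * ‖δ x‖ := by
      have := aux_taylor (A x) hAx LA hLx (gu x) (gv x)
      simpa [sub_add_eq_sub_sub, hδdef] using this
    calc |(inner ℝ (A x (gv x) - (A x (gu x) + fderiv ℝ (A x) (gu x)
          (gv x - gu x))) (w x) : ℝ)|
        ≤ ‖A x (gv x) - (A x (gu x) + fderiv ℝ (A x) (gu x) (gv x - gu x))‖ * ‖w x‖ :=
          abs_real_inner_le_norm _ _
      _ ≤ (LA * ‖δ x‖ * ‖δ x‖) * ‖w x‖ :=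
          mul_le_mul_of_nonneg_right key (norm_nonneg _)
      _ ≤ (LA * M) * (‖δ x‖ * ‖w x‖) := by
          have h1 : LA * ‖δ x‖ ≤ LA * M := mul_le_mul_of_nonneg_left hMx hLA0
          have h2 : LA * ‖δ x‖ * ‖δ x‖ * ‖w x‖ ≤ LA * M * ‖δ x‖ * ‖w x‖ :=
            mul_le_mul_of_nonneg_right
              (mul_le_mul_of_nonneg_right h1 (norm_nonneg _)) (norm_nonneg _)
          calc LA * ‖δ x‖ * ‖δ x‖ * ‖w x‖ ≤ LA * M * ‖δ x‖ * ‖w x‖ := h2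
            _ = (LA * M) * (‖δ x‖ * ‖w x‖) := by ring
  calc |∫ x, (inner ℝ (A x (gv x) - (A x (gu x) + fderiv ℝ (A x) (gu x)
        (gv x - gu x))) (w x) : ℝ) ∂μ|
      ≤ ∫ x, |(inner ℝ (A x (gv x) - (A x (gu x) + fderiv ℝ (A x) (gu x)
        (gv x - gu x))) (w x) : ℝ)| ∂μ := by
        simpa [Real.norm_eq_abs] using norm_integral_le_integral_norm
          (fun x => (inner ℝ (A x (gv x) - (A x (gu x) + fderiv ℝ (A x) (gu x)
            (gv x - gu x))) (w x) : ℝ)) (μ := μ)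
    _ ≤ ∫ x, (LA * M) * (‖δ x‖ * ‖w x‖) ∂μ :=
        integral_mono_ae hint.abs (hmul.const_mul _) hpt
    _ = (LA * M) * ∫ x, ‖δ x‖ * ‖w x‖ ∂μ := integral_const_mul _ _
    _ ≤ (LA * M) * (Real.sqrt (∫ x, ‖δ x‖ ^ 2 ∂μ) * Real.sqrt (∫ x, ‖w x‖ ^ 2 ∂μ)) := by
        apply mul_le_mul_of_nonneg_left (aux_cs hδn hwn) (by positivity)
    _ = LA * M * Real.sqrt (∫ x, ‖gv x - gu x‖ ^ 2 ∂μ)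
          * Real.sqrt (∫ x, ‖w x‖ ^ 2 ∂μ) := by rw [hδdef]; ring
end
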